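/- Let τ ∈ (0,1), σ = √(1 − τ²), and for each θ ∈ ℝ^p let Z ~ N(0, I_p) be a standard Gaussian vector. For θ, θ' ∈ ℝ^p with ‖θ‖₂ = ‖θ'‖₂ = τ, let D = (1/2)[(θθ'^T + θ'θ^T) − τ²(θθ^T + θ'θ'^T)] and λ = (1 − τ⁴)^{-1}. Then E[exp(λ Z^T D Z)] = λ^{-1/2}/(1 − ⟨θ,θ'⟩). -/

import Mathlib

open MeasureTheory ProbabilityTheory ENNReal

lemma lintegral_pi_prod : ∀ {n : ℕ} (f : Fin n → ℝ → ℝ≥0∞), (∀ i, Measurable (f i)) →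
    ∫⁻ z : Fin n → ℝ, ∏ i, f i (z i) ∂(Measure.pi fun _ => (volume : Measure ℝ))
      = ∏ i, ∫⁻ x, f i x := by
  intro n
  induction n with
  | zero =>
    intro f hf
    simp [lintegral_const]
  | succ n ih =>
    intro f hf
    have h := measurePreserving_piFinSuccAbove (fun _ : Fin (n+1) => (volume : Measure ℝ)) 0
    set e := MeasurableEquiv.piFinSuccAbove (fun _ : Fin (n+1) => ℝ) 0 with he
    have hmeas : Measurable fun y : ℝ × (Fin n → ℝ) => ∏ i, f i ((e.symm y) i) := by
      apply Finset.measurable_prod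
      intro i _
      exact (hf i).comp ((measurable_pi_apply i).comp e.symm.measurable)
    have key : ∫⁻ z : Fin (n+1) → ℝ, ∏ i, f i (z i) ∂(Measure.pi fun _ => (volume : Measure ℝ))
        = ∫⁻ y : ℝ × (Fin n → ℝ), ∏ i, f i ((e.symm y) i)
            ∂((volume : Measure ℝ).prod (Measure.pi fun _ : Fin n => (volume : Measure ℝ))) := by
      rw [← h.lintegral_comp hmeas]
      congr 1
      ext z
      simp
    rw [key]
    have hsymm : ∀ (x : ℝ) (w : Fin n → ℝ), (e.symm (x, w)) = Fin.cons x w := by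
      intro x w
      ext i
      simp [he, MeasurableEquiv.piFinSuccAbove, Fin.insertNthEquiv, Fin.insertNth_zero]
    have : ∀ y : ℝ × (Fin n → ℝ), ∏ i, f i ((e.symm y) i)
        = f 0 y.1 * ∏ j : Fin n, f j.succ (y.2 j) := by
      rintro ⟨x, w⟩
      rw [hsymm, Fin.prod_univ_succ]
      simp
    simp_rw [this]
    have hpm := lintegral_prod_mul (μ := (volume : Measure ℝ))
      (ν := Measure.pi fun _ : Fin n => (volume : Measure ℝ))
      (f := fun x : ℝ => f 0 x) (g := fun w : Fin n → ℝ => ∏ j : Fin n, f j.succ (w j))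
      ((hf 0).aemeasurable)
      ((Finset.measurable_prod _ fun (j : Fin n) _ =>
        (hf j.succ).comp (measurable_pi_apply j)).aemeasurable)
    rw [hpm, ih _ (fun j => hf j.succ), Fin.prod_univ_succ]

lemma gaussian_pi_eq_withDensity (p : ℕ) :
    (Measure.pi fun _ : Fin p => gaussianReal 0 1)
      = (Measure.pi fun _ : Fin p => (volume : Measure ℝ)).withDensity
          (fun z => ∏ i, gaussianPDF 0 1 (z i)) := by
  refine Measure.pi_eq fun s hs => ?_
  rw [withDensity_apply _ (MeasurableSet.univ_pi hs)]
  rw [← lintegral_indicator (MeasurableSet.univ_pi hs)]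
  have : ∀ z : Fin p → ℝ, (Set.univ.pi s).indicator (fun z => ∏ i, gaussianPDF 0 1 (z i)) z
      = ∏ i, (s i).indicator (gaussianPDF 0 1) (z i) := by
    intro z
    by_cases hz : z ∈ Set.univ.pi s
    · rw [Set.indicator_of_mem hz]
      refine Finset.prod_congr rfl fun i _ => ?_
      rw [Set.indicator_of_mem (hz i (Set.mem_univ i))]
    · rw [Set.indicator_of_notMem hz]
      rw [Set.mem_pi] at hz
      push_neg at hz
      obtain ⟨i, _, hi⟩ := hz
      exact (Finset.prod_eq_zero (Finset.mem_univ i) (Set.indicator_of_notMem hi _)).symm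
  simp_rw [this]
  rw [lintegral_pi_prod _ (fun i => (measurable_gaussianPDF 0 1).indicator (hs i))]
  refine Finset.prod_congr rfl fun i _ => ?_
  rw [lintegral_indicator (hs i), gaussianReal_apply 0 one_ne_zero (s i)]

lemma lintegral_exp_mul_sq_gaussianPDF {t : ℝ} (ht : t < 1 / 2) :
    ∫⁻ x : ℝ, ENNReal.ofReal (Real.exp (t * x ^ 2) * gaussianPDFReal 0 1 x)
      = ENNReal.ofReal ((Real.sqrt (1 - 2 * t))⁻¹) := by
  have hb : (0 : ℝ) < 1 / 2 - t := by linarith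
  have heq : ∀ x : ℝ, Real.exp (t * x ^ 2) * gaussianPDFReal 0 1 x
      = (Real.sqrt (2 * Real.pi))⁻¹ * Real.exp (-(1 / 2 - t) * x ^ 2) := by
    intro x
    simp only [gaussianPDFReal, NNReal.coe_one, mul_one, sub_zero]
    rw [mul_comm (Real.exp _), mul_assoc, ← Real.exp_add]
    congr 1
    ring
  simp_rw [heq]
  have hint : Integrable (fun x : ℝ => Real.exp (-(1 / 2 - t) * x ^ 2)) :=
    integrable_exp_neg_mul_sq hb
  rw [← ofReal_integral_eq_lintegral_ofReal (hint.const_mul _)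
    (Filter.Eventually.of_forall fun x => by positivity)]
  congr 1
  rw [integral_const_mul, integral_gaussian]
  have h2 : (0:ℝ) < 1 - 2 * t := by linarith
  rw [Real.sqrt_mul (by norm_num : (0:ℝ) ≤ 2), Real.sqrt_div Real.pi_nonneg,
    show (1:ℝ) - 2 * t = 2 * (1/2 - t) by ring, Real.sqrt_mul (by norm_num : (0:ℝ) ≤ 2)]
  have hπ : Real.sqrt Real.pi ≠ 0 := by positivity
  have hbs : Real.sqrt (1/2 - t) ≠ 0 := by positivity
  have h2s : Real.sqrt 2 ≠ 0 := by positivity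
  field_simp

lemma prod_gaussianPDFReal_eq {p : ℕ} (x y : Fin p → ℝ) (h : ∑ i, x i ^ 2 = ∑ i, y i ^ 2) :
    ∏ i, gaussianPDFReal 0 1 (x i) = ∏ i, gaussianPDFReal 0 1 (y i) := by
  have hform : ∀ w : Fin p → ℝ, ∏ i, gaussianPDFReal 0 1 (w i)
      = (Real.sqrt (2 * Real.pi))⁻¹ ^ p * Real.exp (-(∑ i, w i ^ 2) / 2) := by
    intro w
    simp only [gaussianPDFReal, NNReal.coe_one, mul_one, sub_zero]
    rw [Finset.prod_mul_distrib, Finset.prod_const, ← Real.exp_sum, Finset.card_univ,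
      Fintype.card_fin]
    congr 1
    rw [← Finset.sum_div, ← Finset.sum_neg_distrib]
  rw [hform, hform, h]

lemma integral_exp_sum_sq (p : ℕ) (b : OrthonormalBasis (Fin p) ℝ (EuclideanSpace ℝ (Fin p)))
    (t : Fin p → ℝ) (ht : ∀ i, t i < 1 / 2) :
    ∫ z : Fin p → ℝ, Real.exp (∑ i, t i * (b.repr ((WithLp.equiv 2 (Fin p → ℝ)).symm z) i) ^ 2)
        ∂(Measure.pi fun _ : Fin p => gaussianReal 0 1)
      = ∏ i, (Real.sqrt (1 - 2 * t i))⁻¹ := by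
  -- continuity / measurability of the exponent
  have hcont : Continuous fun z : Fin p → ℝ =>
      Real.exp (∑ i, t i * (b.repr ((WithLp.equiv 2 (Fin p → ℝ)).symm z) i) ^ 2) := by
    refine Real.continuous_exp.comp ?_
    refine continuous_finset_sum _ fun i _ => ?_
    exact (continuous_const.mul (((continuous_apply i).comp ((PiLp.continuous_ofLp 2 fun _ : Fin p => ℝ).comp
      (b.repr.continuous.comp (PiLp.continuous_toLp 2 fun _ : Fin p => ℝ)))).pow 2))
  rw [integral_eq_lintegral_of_nonneg_ae
    (Filter.Eventually.of_forall fun z => Real.exp_nonneg _) hcont.aestronglyMeasurable]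
  rw [gaussian_pi_eq_withDensity]
  have hwd := lintegral_withDensity_eq_lintegral_mul
    (μ := Measure.pi fun _ : Fin p => (volume : Measure ℝ))
    (f := fun z : Fin p → ℝ => ∏ i, gaussianPDF 0 1 (z i))
    (Finset.measurable_prod _ fun i _ => (measurable_gaussianPDF 0 1).comp (measurable_pi_apply i))
    (g := fun z : Fin p → ℝ =>
      ENNReal.ofReal (Real.exp (∑ i, t i * (b.repr ((WithLp.equiv 2 (Fin p → ℝ)).symm z) i) ^ 2)))
    (measurable_ofReal.comp hcont.measurable)
  rw [hwd]
  simp only [Pi.mul_apply]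
  -- pointwise rewrite to a single ofReal
  have hpt : ∀ z : Fin p → ℝ,
      (∏ i, gaussianPDF 0 1 (z i)) *
        ENNReal.ofReal (Real.exp (∑ i, t i * (b.repr ((WithLp.equiv 2 (Fin p → ℝ)).symm z) i) ^ 2))
      = ENNReal.ofReal (Real.exp (∑ i, t i * (b.repr ((WithLp.equiv 2 (Fin p → ℝ)).symm z) i) ^ 2)
          * ∏ i, gaussianPDFReal 0 1 (z i)) := by
    intro z
    simp only [gaussianPDF]
    rw [← ENNReal.ofReal_prod_of_nonneg (fun i _ => gaussianPDFReal_nonneg 0 1 (z i)),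
      ← ENNReal.ofReal_mul (Finset.prod_nonneg fun i _ => gaussianPDFReal_nonneg 0 1 (z i)), mul_comm]
  simp_rw [hpt]
  -- change of variables
  set φ : (Fin p → ℝ) → (Fin p → ℝ) := fun w =>
    (WithLp.equiv 2 (Fin p → ℝ)) (b.repr.symm ((WithLp.equiv 2 (Fin p → ℝ)).symm w)) with hφ
  have hmp : MeasurePreserving φ (Measure.pi fun _ : Fin p => (volume : Measure ℝ))
      (Measure.pi fun _ : Fin p => (volume : Measure ℝ)) := by
    have h1 := (EuclideanSpace.volume_preserving_symm_measurableEquiv_toLp (Fin p)).symm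
    have h2 := (b.repr.symm : EuclideanSpace ℝ (Fin p) ≃ₗᵢ[ℝ] _).measurePreserving
    have h3 := EuclideanSpace.volume_preserving_symm_measurableEquiv_toLp (Fin p)
    have h4 := (h3.comp h2).comp h1
    have hfun : (⇑(MeasurableEquiv.toLp 2 (Fin p → ℝ)).symm ∘ ⇑(b.repr.symm) ∘
        ⇑(MeasurableEquiv.toLp 2 (Fin p → ℝ))) = φ := by
      ext w
      simp [hφ]
    rw [← MeasureTheory.volume_pi]
    exact hfun ▸ h4
  have hsq : ∀ x : EuclideanSpace ℝ (Fin p), ∑ i, (x i) ^ 2 = ‖x‖ ^ 2 := by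
    intro x
    rw [EuclideanSpace.norm_eq, Real.sq_sqrt (by positivity)]
    simp [sq_abs]
  have hF : Measurable fun z : Fin p → ℝ =>
      ENNReal.ofReal (Real.exp (∑ i, t i * (b.repr ((WithLp.equiv 2 (Fin p → ℝ)).symm z) i) ^ 2)
        * ∏ i, gaussianPDFReal 0 1 (z i)) := by
    apply measurable_ofReal.comp
    exact (hcont.measurable.mul
      (Finset.measurable_prod _ fun i _ =>
        (measurable_gaussianPDFReal 0 1).comp (measurable_pi_apply i)))
  rw [← hmp.lintegral_comp hF]
  have hcomp : ∀ w : Fin p → ℝ,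
      ENNReal.ofReal (Real.exp (∑ i, t i * (b.repr ((WithLp.equiv 2 (Fin p → ℝ)).symm (φ w)) i) ^ 2)
        * ∏ i, gaussianPDFReal 0 1 (φ w i))
      = ∏ i, ENNReal.ofReal (Real.exp (t i * (w i) ^ 2) * gaussianPDFReal 0 1 (w i)) := by
    intro w
    have h1 : ∀ i, b.repr ((WithLp.equiv 2 (Fin p → ℝ)).symm (φ w)) i = w i := by
      intro i
      rw [hφ]
      simp
    have h2 : ∏ i, gaussianPDFReal 0 1 (φ w i) = ∏ i, gaussianPDFReal 0 1 (w i) := by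
      apply prod_gaussianPDFReal_eq
      have : ∑ i, (φ w i) ^ 2 = ‖b.repr.symm ((WithLp.equiv 2 (Fin p → ℝ)).symm w)‖ ^ 2 := by
        rw [← hsq]
        rfl
      rw [this, LinearIsometryEquiv.norm_map, ← hsq]
      rfl
    simp_rw [h1, h2]
    rw [Real.exp_sum, ← Finset.prod_mul_distrib,
      ENNReal.ofReal_prod_of_nonneg (fun i _ => mul_nonneg (Real.exp_nonneg _) (gaussianPDFReal_nonneg 0 1 _))]
  simp_rw [hcomp]
  rw [lintegral_pi_prod
    (fun i => fun x : ℝ => ENNReal.ofReal (Real.exp (t i * x ^ 2) * gaussianPDFReal 0 1 x))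
    (fun i => measurable_ofReal.comp
      (((Real.continuous_exp.comp (by fun_prop)).measurable).mul (measurable_gaussianPDFReal 0 1)))]
  have hlast : ∀ i : Fin p, ∫⁻ x : ℝ, ENNReal.ofReal (Real.exp (t i * x ^ 2) * gaussianPDFReal 0 1 x)
      = ENNReal.ofReal ((Real.sqrt (1 - 2 * t i))⁻¹) := fun i =>
    lintegral_exp_mul_sq_gaussianPDF (ht i)
  simp_rw [hlast]
  rw [← ENNReal.ofReal_prod_of_nonneg (fun i _ => by positivity),
    ENNReal.toReal_ofReal (Finset.prod_nonneg fun i _ => by positivity)]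

lemma integral_exp_orth_family (p : ℕ) (w : Fin p → EuclideanSpace ℝ (Fin p)) (c : Fin p → ℝ)
    (horth : ∀ i j, i ≠ j → (inner ℝ (w i) (w j) : ℝ) = 0)
    (hc : ∀ i, 2 * c i * ‖w i‖ ^ 2 < 1) :
    ∫ z : Fin p → ℝ, Real.exp
        (∑ i, c i * (inner ℝ (w i) ((WithLp.equiv 2 (Fin p → ℝ)).symm z) : ℝ) ^ 2)
        ∂(Measure.pi fun _ : Fin p => gaussianReal 0 1)
      = ∏ i, (Real.sqrt (1 - 2 * c i * ‖w i‖ ^ 2))⁻¹ := by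
  classical
  set s : Set (Fin p) := {i | w i ≠ 0} with hs
  set v : Fin p → EuclideanSpace ℝ (Fin p) := fun i => (‖w i‖)⁻¹ • w i with hv
  have hvon : Orthonormal ℝ (s.restrict v) := by
    rw [orthonormal_iff_ite]
    rintro ⟨i, hi⟩ ⟨j, hj⟩
    by_cases hij : i = j
    · subst hij
      simp only [Set.restrict, Set.domRestrict, hv]
      rw [real_inner_smul_left, real_inner_smul_right, real_inner_self_eq_norm_sq]
      have hwi : ‖w i‖ ≠ 0 := norm_ne_zero_iff.mpr hi
      field_simp
      simp
    · have : (⟨i, hi⟩ : s) ≠ ⟨j, hj⟩ := by simpa using hij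
      simp only [Set.restrict, Set.domRestrict, hv, if_neg this]
      rw [real_inner_smul_left, real_inner_smul_right, horth i j hij]
      ring
  obtain ⟨b, hb⟩ := hvon.exists_orthonormalBasis_extension_of_card_eq
    (by simp [finrank_euclideanSpace])
  set t : Fin p → ℝ := fun i => if w i ≠ 0 then c i * ‖w i‖ ^ 2 else 0 with ht'
  have hti : ∀ i, w i ≠ 0 → t i = c i * ‖w i‖ ^ 2 := by
    intro i hi
    simp only [ht']
    rw [if_pos hi]
  have htz : ∀ i, w i = 0 → t i = 0 := by
    intro i hi
    simp only [ht']
    rw [if_neg (by simp [hi])]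
  have ht : ∀ i, t i < 1 / 2 := by
    intro i
    by_cases hi : w i ≠ 0
    · rw [hti i hi]
      linarith [hc i]
    · push_neg at hi
      rw [htz i hi]
      norm_num
  have hsum : ∀ z : Fin p → ℝ,
      ∑ i, t i * (b.repr ((WithLp.equiv 2 (Fin p → ℝ)).symm z) i) ^ 2
        = ∑ i, c i * (inner ℝ (w i) ((WithLp.equiv 2 (Fin p → ℝ)).symm z) : ℝ) ^ 2 := by
    intro z
    refine Finset.sum_congr rfl fun i _ => ?_
    by_cases hi : w i ≠ 0
    · have hbi : b i = v i := hb i hi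
      rw [hti i hi, OrthonormalBasis.repr_apply_apply, hbi, hv]
      simp only [real_inner_smul_left]
      have hwi : ‖w i‖ ≠ 0 := norm_ne_zero_iff.mpr hi
      field_simp
    · push_neg at hi
      rw [htz i hi, hi]
      simp
  have hprod : ∏ i, (Real.sqrt (1 - 2 * t i))⁻¹
      = ∏ i, (Real.sqrt (1 - 2 * c i * ‖w i‖ ^ 2))⁻¹ := by
    refine Finset.prod_congr rfl fun i _ => ?_
    by_cases hi : w i ≠ 0
    · rw [hti i hi]
      ring_nf
    · push_neg at hi
      rw [htz i hi, hi]
      norm_num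
  rw [← hprod, ← integral_exp_sum_sq p b t ht]
  congr 1
  ext z
  rw [hsum]


lemma integral_exp_two_sq (p : ℕ) (c₁ c₂ : ℝ) (u v : EuclideanSpace ℝ (Fin p))
    (huv : (inner ℝ u v : ℝ) = 0) (h₁ : 2 * c₁ * ‖u‖ ^ 2 < 1) (h₂ : 2 * c₂ * ‖v‖ ^ 2 < 1) :
    ∫ z : Fin p → ℝ, Real.exp
        (c₁ * (inner ℝ u ((WithLp.equiv 2 (Fin p → ℝ)).symm z) : ℝ) ^ 2
          + c₂ * (inner ℝ v ((WithLp.equiv 2 (Fin p → ℝ)).symm z) : ℝ) ^ 2)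
        ∂(Measure.pi fun _ : Fin p => gaussianReal 0 1)
      = (Real.sqrt (1 - 2 * c₁ * ‖u‖ ^ 2) * Real.sqrt (1 - 2 * c₂ * ‖v‖ ^ 2))⁻¹ := by
  classical
  have hvu : (inner ℝ v u : ℝ) = 0 := by rw [real_inner_comm]; exact huv
  by_cases hu : u = 0
  · by_cases hv : v = 0
    · simp only [hu, hv, inner_zero_left, norm_zero]
      norm_num
    · -- u = 0, v ≠ 0
      have hp : 0 < p := by
        rcases Nat.eq_zero_or_pos p with h | h
        · subst h; exact absurd (Subsingleton.elim v 0) hv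
        · exact h
      set i₀ : Fin p := ⟨0, hp⟩ with hi₀
      set w : Fin p → EuclideanSpace ℝ (Fin p) := fun i => if i = i₀ then v else 0 with hw
      set c : Fin p → ℝ := fun i => if i = i₀ then c₂ else 0 with hc
      have horth : ∀ i j, i ≠ j → (inner ℝ (w i) (w j) : ℝ) = 0 := by
        intro i j hij
        by_cases hi : i = i₀
        · have hj : j ≠ i₀ := fun h => hij (hi.trans h.symm)
          have hwj : w j = 0 := by simp [hw, hj]
          rw [hwj, inner_zero_right]
        · have hwi : w i = 0 := by simp [hw, hi]
          rw [hwi, inner_zero_left]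
      have hcc : ∀ i, 2 * c i * ‖w i‖ ^ 2 < 1 := by
        intro i
        by_cases hi : i = i₀
        · simpa [hc, hw, hi] using h₂
        · simp [hc, hw, hi]
      have hsum : ∀ z : Fin p → ℝ,
          ∑ i, c i * (inner ℝ (w i) ((WithLp.equiv 2 (Fin p → ℝ)).symm z) : ℝ) ^ 2
            = c₂ * (inner ℝ v ((WithLp.equiv 2 (Fin p → ℝ)).symm z) : ℝ) ^ 2 := by
        intro z
        have hterm : ∀ i, c i * (inner ℝ (w i) ((WithLp.equiv 2 (Fin p → ℝ)).symm z) : ℝ) ^ 2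
            = if i = i₀ then c₂ * (inner ℝ v ((WithLp.equiv 2 (Fin p → ℝ)).symm z) : ℝ) ^ 2
              else 0 := by
          intro i
          by_cases hi : i = i₀ <;> simp [hc, hw, hi]
        simp_rw [hterm]
        rw [Finset.sum_ite_eq' Finset.univ i₀]
        simp
      have hprod : ∏ i, (Real.sqrt (1 - 2 * c i * ‖w i‖ ^ 2))⁻¹
          = (Real.sqrt (1 - 2 * c₂ * ‖v‖ ^ 2))⁻¹ := by
        have hterm : ∀ i, (Real.sqrt (1 - 2 * c i * ‖w i‖ ^ 2))⁻¹
            = if i = i₀ then (Real.sqrt (1 - 2 * c₂ * ‖v‖ ^ 2))⁻¹ else 1 := by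
          intro i
          by_cases hi : i = i₀ <;> simp [hc, hw, hi]
        simp_rw [hterm]
        rw [Finset.prod_ite_eq' Finset.univ i₀]
        simp
      rw [hu]
      simp only [inner_zero_left, norm_zero, ne_eq, OfNat.ofNat_ne_zero, not_false_eq_true,
        zero_pow, mul_zero, zero_add, sub_zero, Real.sqrt_one, one_mul]
      rw [← hprod, ← integral_exp_orth_family p w c horth hcc]
      congr 1
      funext z
      exact congrArg Real.exp (hsum z).symm
  · by_cases hv : v = 0
    · -- u ≠ 0, v = 0
      have hp : 0 < p := by
        rcases Nat.eq_zero_or_pos p with h | h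
        · subst h; exact absurd (Subsingleton.elim u 0) hu
        · exact h
      set i₀ : Fin p := ⟨0, hp⟩ with hi₀
      set w : Fin p → EuclideanSpace ℝ (Fin p) := fun i => if i = i₀ then u else 0 with hw
      set c : Fin p → ℝ := fun i => if i = i₀ then c₁ else 0 with hc
      have horth : ∀ i j, i ≠ j → (inner ℝ (w i) (w j) : ℝ) = 0 := by
        intro i j hij
        by_cases hi : i = i₀
        · have hj : j ≠ i₀ := fun h => hij (hi.trans h.symm)
          have hwj : w j = 0 := by simp [hw, hj]
          rw [hwj, inner_zero_right]
        · have hwi : w i = 0 := by simp [hw, hi]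
          rw [hwi, inner_zero_left]
      have hcc : ∀ i, 2 * c i * ‖w i‖ ^ 2 < 1 := by
        intro i
        by_cases hi : i = i₀
        · simpa [hc, hw, hi] using h₁
        · simp [hc, hw, hi]
      have hsum : ∀ z : Fin p → ℝ,
          ∑ i, c i * (inner ℝ (w i) ((WithLp.equiv 2 (Fin p → ℝ)).symm z) : ℝ) ^ 2
            = c₁ * (inner ℝ u ((WithLp.equiv 2 (Fin p → ℝ)).symm z) : ℝ) ^ 2 := by
        intro z
        have hterm : ∀ i, c i * (inner ℝ (w i) ((WithLp.equiv 2 (Fin p → ℝ)).symm z) : ℝ) ^ 2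
            = if i = i₀ then c₁ * (inner ℝ u ((WithLp.equiv 2 (Fin p → ℝ)).symm z) : ℝ) ^ 2
              else 0 := by
          intro i
          by_cases hi : i = i₀ <;> simp [hc, hw, hi]
        simp_rw [hterm]
        rw [Finset.sum_ite_eq' Finset.univ i₀]
        simp
      have hprod : ∏ i, (Real.sqrt (1 - 2 * c i * ‖w i‖ ^ 2))⁻¹
          = (Real.sqrt (1 - 2 * c₁ * ‖u‖ ^ 2))⁻¹ := by
        have hterm : ∀ i, (Real.sqrt (1 - 2 * c i * ‖w i‖ ^ 2))⁻¹
            = if i = i₀ then (Real.sqrt (1 - 2 * c₁ * ‖u‖ ^ 2))⁻¹ else 1 := by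
          intro i
          by_cases hi : i = i₀ <;> simp [hc, hw, hi]
        simp_rw [hterm]
        rw [Finset.prod_ite_eq' Finset.univ i₀]
        simp
      rw [hv]
      simp only [inner_zero_left, norm_zero, ne_eq, OfNat.ofNat_ne_zero, not_false_eq_true,
        zero_pow, mul_zero, add_zero, sub_zero, Real.sqrt_one, mul_one]
      rw [← hprod, ← integral_exp_orth_family p w c horth hcc]
      congr 1
      funext z
      exact congrArg Real.exp (hsum z).symm
    · -- both nonzero
      have hli : LinearIndependent ℝ ![u, v] := by
        rw [linearIndependent_fin2]
        refine ⟨by simpa using hv, fun a ha => ?_⟩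
        simp only [Matrix.cons_val_one, Matrix.head_cons, Matrix.cons_val_zero] at ha
        apply hu
        have h0 : (inner ℝ u v : ℝ) = a * ‖v‖ ^ 2 := by
          rw [← ha, real_inner_smul_left, real_inner_self_eq_norm_sq]
        have hvn : ‖v‖ ≠ 0 := norm_ne_zero_iff.mpr hv
        have ha0 : a = 0 := by
          rw [huv] at h0
          have : a * ‖v‖ ^ 2 = 0 := h0.symm
          rcases mul_eq_zero.mp this with h | h
          · exact h
          · exact absurd h (pow_ne_zero 2 hvn)
        rw [← ha, ha0, zero_smul]
      have hp2 : 2 ≤ p := by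
        have := hli.fintype_card_le_finrank
        simpa [finrank_euclideanSpace_fin] using this
      set i₀ : Fin p := ⟨0, by omega⟩ with hi₀
      set i₁ : Fin p := ⟨1, by omega⟩ with hi₁
      have hne : i₀ ≠ i₁ := by
        simp [hi₀, hi₁, Fin.ext_iff]
      set w : Fin p → EuclideanSpace ℝ (Fin p) :=
        fun i => if i = i₀ then u else if i = i₁ then v else 0 with hw
      set c : Fin p → ℝ := fun i => if i = i₀ then c₁ else if i = i₁ then c₂ else 0 with hc
      have horth : ∀ i j, i ≠ j → (inner ℝ (w i) (w j) : ℝ) = 0 := by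
        intro i j hij
        by_cases hi : i = i₀
        · by_cases hj' : j = i₁
          · have hj0 : j ≠ i₀ := by rw [hj']; exact hne.symm
            rw [show w i = u from by simp [hw, hi],
              show w j = v from by simp [hw, hj', hne.symm]]
            exact huv
          · have hj0 : j ≠ i₀ := fun h => hij (hi.trans h.symm)
            have hwj : w j = 0 := by simp [hw, hj0, hj']
            rw [hwj, inner_zero_right]
        · by_cases hi' : i = i₁
          · by_cases hj0 : j = i₀
            · rw [show w i = v from by simp [hw, hi', hne.symm],
                show w j = u from by simp [hw, hj0]]
              exact hvu
            · have hj1 : j ≠ i₁ := fun h => hij (hi'.trans h.symm)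
              have hwj : w j = 0 := by simp [hw, hj0, hj1]
              rw [hwj, inner_zero_right]
          · have hwi : w i = 0 := by simp [hw, hi, hi']
            rw [hwi, inner_zero_left]
      have hcc : ∀ i, 2 * c i * ‖w i‖ ^ 2 < 1 := by
        intro i
        by_cases hi : i = i₀
        · simpa [hc, hw, hi, hne] using h₁
        · by_cases hi' : i = i₁
          · simpa [hc, hw, hi, hi', hne, hne.symm] using h₂
          · simp [hc, hw, hi, hi']
      have hsum : ∀ z : Fin p → ℝ,
          ∑ i, c i * (inner ℝ (w i) ((WithLp.equiv 2 (Fin p → ℝ)).symm z) : ℝ) ^ 2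
            = c₁ * (inner ℝ u ((WithLp.equiv 2 (Fin p → ℝ)).symm z) : ℝ) ^ 2
              + c₂ * (inner ℝ v ((WithLp.equiv 2 (Fin p → ℝ)).symm z) : ℝ) ^ 2 := by
        intro z
        have hterm : ∀ i, c i * (inner ℝ (w i) ((WithLp.equiv 2 (Fin p → ℝ)).symm z) : ℝ) ^ 2
            = (if i = i₀ then c₁ * (inner ℝ u ((WithLp.equiv 2 (Fin p → ℝ)).symm z) : ℝ) ^ 2 else 0)
              + (if i = i₁ then c₂ * (inner ℝ v ((WithLp.equiv 2 (Fin p → ℝ)).symm z) : ℝ) ^ 2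
                else 0) := by
          intro i
          by_cases hi : i = i₀
          · have : i ≠ i₁ := by rw [hi]; exact hne
            simp [hc, hw, hi, this, hne, hne.symm]
          · by_cases hi' : i = i₁ <;> simp [hc, hw, hi, hi', hne, hne.symm]
        simp_rw [hterm]
        rw [Finset.sum_add_distrib, Finset.sum_ite_eq' Finset.univ i₀,
          Finset.sum_ite_eq' Finset.univ i₁]
        simp
      have hprod : ∏ i, (Real.sqrt (1 - 2 * c i * ‖w i‖ ^ 2))⁻¹
          = (Real.sqrt (1 - 2 * c₁ * ‖u‖ ^ 2))⁻¹ * (Real.sqrt (1 - 2 * c₂ * ‖v‖ ^ 2))⁻¹ := by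
        have hterm : ∀ i, (Real.sqrt (1 - 2 * c i * ‖w i‖ ^ 2))⁻¹
            = (if i = i₀ then (Real.sqrt (1 - 2 * c₁ * ‖u‖ ^ 2))⁻¹ else 1)
              * (if i = i₁ then (Real.sqrt (1 - 2 * c₂ * ‖v‖ ^ 2))⁻¹ else 1) := by
          intro i
          by_cases hi : i = i₀
          · have : i ≠ i₁ := by rw [hi]; exact hne
            simp [hc, hw, hi, this, hne, hne.symm]
          · by_cases hi' : i = i₁ <;> simp [hc, hw, hi, hi', hne, hne.symm]
        simp_rw [hterm]
        rw [Finset.prod_mul_distrib, Finset.prod_ite_eq' Finset.univ i₀,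
          Finset.prod_ite_eq' Finset.univ i₁]
        simp
      rw [mul_inv, ← hprod, ← integral_exp_orth_family p w c horth hcc]
      congr 1
      funext z
      exact congrArg Real.exp (hsum z).symm

open Matrix MeasureTheory in
/-- For `Z ~ N(0, I_p)`, `E[exp (λ ZᵀDZ)] = λ^{-1/2}/(1 − ⟨θ,θ'⟩)`. -/
theorem stmt_4 (p : ℕ) (τ : ℝ) (hτ : τ ∈ Set.Ioo (0 : ℝ) 1)
    (σ : ℝ) (hσ : σ = Real.sqrt (1 - τ ^ 2)) (θ θ' : Fin p → ℝ)
    (hθ : Real.sqrt (∑ i, θ i ^ 2) = τ) (hθ' : Real.sqrt (∑ i, θ' i ^ 2) = τ)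
    (D : Matrix (Fin p) (Fin p) ℝ)
    (hD : D = (1 / 2 : ℝ) •
      (vecMulVec θ θ' + vecMulVec θ' θ - τ ^ 2 • (vecMulVec θ θ + vecMulVec θ' θ')))
    (lam : ℝ) (hlam : lam = (1 - τ ^ 4)⁻¹) :
    ∫ z : Fin p → ℝ, Real.exp (lam * dotProduct z (D.mulVec z))
        ∂(Measure.pi fun _ : Fin p => ProbabilityTheory.gaussianReal 0 1)
      = lam ^ (-(1 : ℝ) / 2) / (1 - ∑ i, θ i * θ' i) := by
  obtain ⟨hτ0, hτ1⟩ := hτ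
  set s : ℝ := ∑ i, θ i * θ' i with hs
  have hθ2 : ∑ i, θ i ^ 2 = τ ^ 2 := by
    rw [← hθ, Real.sq_sqrt (Finset.sum_nonneg fun i _ => sq_nonneg _)]
  have hθ'2 : ∑ i, θ' i ^ 2 = τ ^ 2 := by
    rw [← hθ', Real.sq_sqrt (Finset.sum_nonneg fun i _ => sq_nonneg _)]
  have hτ2 : τ ^ 2 < 1 := by nlinarith
  have hsub : ∑ i, (θ i - θ' i) ^ 2 = 2 * τ ^ 2 - 2 * s := by
    have h1 : ∀ i ∈ Finset.univ, (θ i - θ' i) ^ 2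
        = (θ i ^ 2 + θ' i ^ 2) - 2 * (θ i * θ' i) := fun i _ => by ring
    rw [Finset.sum_congr rfl h1, Finset.sum_sub_distrib, Finset.sum_add_distrib,
      ← Finset.mul_sum, hθ2, hθ'2, ← hs]
    ring
  have hadd : ∑ i, (θ i + θ' i) ^ 2 = 2 * τ ^ 2 + 2 * s := by
    have h1 : ∀ i ∈ Finset.univ, (θ i + θ' i) ^ 2
        = (θ i ^ 2 + θ' i ^ 2) + 2 * (θ i * θ' i) := fun i _ => by ring
    rw [Finset.sum_congr rfl h1, Finset.sum_add_distrib, Finset.sum_add_distrib,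
      ← Finset.mul_sum, hθ2, hθ'2, ← hs]
    ring
  have hsle : s ≤ τ ^ 2 := by
    have := Finset.sum_nonneg (fun i (_ : i ∈ Finset.univ) => sq_nonneg (θ i - θ' i))
    rw [hsub] at this; linarith
  have hsge : -τ ^ 2 ≤ s := by
    have := Finset.sum_nonneg (fun i (_ : i ∈ Finset.univ) => sq_nonneg (θ i + θ' i))
    rw [hadd] at this; linarith
  have hs1 : s < 1 := lt_of_le_of_lt hsle hτ2
  have h1τ : (0:ℝ) < 1 - τ ^ 2 := by linarith
  have h2τ : (0:ℝ) < 1 + τ ^ 2 := by positivity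
  have h4τ : (0:ℝ) < 1 - τ ^ 4 := by nlinarith
  have hlampos : 0 < lam := by rw [hlam]; positivity
  -- the two vectors
  set u : EuclideanSpace ℝ (Fin p) := (WithLp.equiv 2 (Fin p → ℝ)).symm (fun i => θ i + θ' i)
    with hu
  set v : EuclideanSpace ℝ (Fin p) := (WithLp.equiv 2 (Fin p → ℝ)).symm (fun i => θ i - θ' i)
    with hv
  set c₁ : ℝ := lam * (1 - τ ^ 2) / 4 with hc₁
  set c₂ : ℝ := -(lam * (1 + τ ^ 2)) / 4 with hc₂
  have hinner : ∀ x y : Fin p → ℝ,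
      (inner ℝ ((WithLp.equiv 2 (Fin p → ℝ)).symm x) ((WithLp.equiv 2 (Fin p → ℝ)).symm y) : ℝ)
        = ∑ i, x i * y i := by
    intro x y
    simp [PiLp.inner_apply, RCLike.inner_apply, conj_trivial]
    exact Finset.sum_congr rfl fun i _ => mul_comm _ _
  have huv : (inner ℝ u v : ℝ) = 0 := by
    rw [hu, hv, hinner]
    have h1 : ∀ i ∈ Finset.univ, (θ i + θ' i) * (θ i - θ' i) = θ i ^ 2 - θ' i ^ 2 :=
      fun i _ => by ring
    rw [Finset.sum_congr rfl h1, Finset.sum_sub_distrib, hθ2, hθ'2, sub_self]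
  have hnu : ‖u‖ ^ 2 = 2 * τ ^ 2 + 2 * s := by
    rw [← real_inner_self_eq_norm_sq, hu, hinner]
    rw [← hadd]
    exact Finset.sum_congr rfl fun i _ => by ring
  have hnv : ‖v‖ ^ 2 = 2 * τ ^ 2 - 2 * s := by
    rw [← real_inner_self_eq_norm_sq, hv, hinner]
    rw [← hsub]
    exact Finset.sum_congr rfl fun i _ => by ring
  have hlamprod : lam * (1 - τ ^ 4) = 1 := by
    rw [hlam]; field_simp
  have hq1 : 1 - 2 * c₁ * ‖u‖ ^ 2 = (1 - s) / (1 + τ ^ 2) := by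
    rw [hnu, hc₁, hlam]
    rw [eq_div_iff (ne_of_gt h2τ)]
    field_simp
    ring
  have hq2 : 1 - 2 * c₂ * ‖v‖ ^ 2 = (1 - s) / (1 - τ ^ 2) := by
    rw [hnv, hc₂, hlam]
    rw [eq_div_iff (ne_of_gt h1τ)]
    field_simp
    ring
  have h₁ : 2 * c₁ * ‖u‖ ^ 2 < 1 := by
    have : (0:ℝ) < (1 - s) / (1 + τ ^ 2) := div_pos (by linarith) h2τ
    linarith [hq1]
  have h₂ : 2 * c₂ * ‖v‖ ^ 2 < 1 := by
    have : (0:ℝ) < (1 - s) / (1 - τ ^ 2) := div_pos (by linarith) h1τ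
    linarith [hq2]
  -- quadratic form identity
  have hvmv : ∀ (a b : Fin p → ℝ) (z : Fin p → ℝ),
      dotProduct z ((Matrix.vecMulVec a b).mulVec z)
        = (∑ i, a i * z i) * (∑ i, b i * z i) := by
    intro a b z
    rw [Finset.sum_mul_sum]
    simp only [dotProduct, Matrix.mulVec, Matrix.vecMulVec_apply, Finset.mul_sum]
    refine Finset.sum_congr rfl fun i _ => Finset.sum_congr rfl fun j _ => by ring
  have hint : ∀ z : Fin p → ℝ, lam * dotProduct z (D.mulVec z)
      = c₁ * (inner ℝ u ((WithLp.equiv 2 (Fin p → ℝ)).symm z) : ℝ) ^ 2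
        + c₂ * (inner ℝ v ((WithLp.equiv 2 (Fin p → ℝ)).symm z) : ℝ) ^ 2 := by
    intro z
    have hA : (inner ℝ u ((WithLp.equiv 2 (Fin p → ℝ)).symm z) : ℝ)
        = (∑ i, θ i * z i) + ∑ i, θ' i * z i := by
      rw [hu, hinner, ← Finset.sum_add_distrib]
      exact Finset.sum_congr rfl fun i _ => by ring
    have hB : (inner ℝ v ((WithLp.equiv 2 (Fin p → ℝ)).symm z) : ℝ)
        = (∑ i, θ i * z i) - ∑ i, θ' i * z i := by
      rw [hv, hinner, ← Finset.sum_sub_distrib]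
      exact Finset.sum_congr rfl fun i _ => by ring
    have hquad : dotProduct z (D.mulVec z)
        = (∑ i, θ i * z i) * (∑ i, θ' i * z i)
          - τ ^ 2 / 2 * ((∑ i, θ i * z i) ^ 2 + (∑ i, θ' i * z i) ^ 2) := by
      rw [hD]
      rw [Matrix.smul_mulVec, Matrix.sub_mulVec, Matrix.add_mulVec,
        Matrix.smul_mulVec, Matrix.add_mulVec]
      simp only [dotProduct_smul, dotProduct_sub, dotProduct_add]
      rw [hvmv, hvmv, hvmv, hvmv]
      simp only [smul_eq_mul]
      ring
    rw [hquad, hA, hB, hc₁, hc₂]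
    ring
  simp_rw [hint]
  rw [integral_exp_two_sq p c₁ c₂ u v huv h₁ h₂]
  rw [hq1, hq2]
  -- final algebra
  have h1s : (0:ℝ) ≤ 1 - s := by linarith
  have hsqrt : Real.sqrt ((1 - s) / (1 + τ ^ 2)) * Real.sqrt ((1 - s) / (1 - τ ^ 2))
      = (1 - s) / Real.sqrt (1 - τ ^ 4) := by
    rw [← Real.sqrt_mul (by positivity)]
    rw [show (1 - s) / (1 + τ ^ 2) * ((1 - s) / (1 - τ ^ 2)) = (1 - s) ^ 2 / (1 - τ ^ 4) by
      field_simp; ring]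
    rw [Real.sqrt_div (sq_nonneg _), Real.sqrt_sq h1s]
  rw [hsqrt]
  have hrpow : lam ^ (-(1:ℝ) / 2) = Real.sqrt (1 - τ ^ 4) := by
    rw [hlam]
    rw [show (-(1:ℝ)/2) = -(1/2 : ℝ) by norm_num]
    rw [Real.rpow_neg (by positivity), Real.inv_rpow (le_of_lt h4τ), inv_inv,
      Real.sqrt_eq_rpow]
  rw [hrpow, inv_div]
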